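/- If g : M → L is a dense frame homomorphism, M is a regular frame, L is a compact frame, then g is codense: g a = ⊤ implies a = ⊤. -/

import Mathlib

/-- The well-inside relation of a frame: `b` is well inside `a` iff `bᶜ ⊔ a = ⊤`. -/
def WellInside {L : Type*} [Order.Frame L] (b a : L) : Prop := bᶜ ⊔ a = ⊤

/-- A frame is regular if every element is the join of the elements well inside it. -/
def IsRegularFrame (L : Type*) [Order.Frame L] : Prop :=
  ∀ a : L, a = sSup {b | WellInside b a}

/-- A frame is compact if `⊤` is a compact element. -/
def IsCompactFrame (L : Type*) [Order.Frame L] : Prop :=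
  ∀ S : Set L, ⊤ ≤ sSup S → ∃ T : Set L, T ⊆ S ∧ T.Finite ∧ ⊤ ≤ sSup T

lemma finite_subset_image_aux {α β : Type*} (f : α → β) {s : Set α} {t : Set β}
    (ht : t.Finite) (h : t ⊆ f '' s) : ∃ u, u ⊆ s ∧ u.Finite ∧ f '' u = t := by
  revert h
  refine Set.Finite.induction_on t ht (fun _ => ⟨∅, by simp⟩) ?_
  intro x t' _ _ ih h
  obtain ⟨u, hus, hufin, hui⟩ := ih (fun y hy => h (Set.mem_insert_of_mem x hy))
  obtain ⟨a, has, hax⟩ := h (Set.mem_insert x t')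
  exact ⟨insert a u, Set.insert_subset has hus, hufin.insert a,
    by rw [Set.image_insert_eq, hax, hui]⟩

/-- A dense frame homomorphism from a regular frame to a compact frame is codense. -/
theorem dense_frameHom_codense
    {M L : Type*} [Order.Frame M] [Order.Frame L] (g : FrameHom M L)
    (hdense : ∀ a : M, g a = ⊥ → a = ⊥)
    (hreg : IsRegularFrame M) (hcomp : IsCompactFrame L) :
    ∀ a : M, g a = ⊤ → a = ⊤ := by
  intro a hga
  set S : Set M := {b | WellInside b a} with hS
  have hcover : ⊤ ≤ sSup (g '' S) := by
    have h1 : g a = sSup (g '' S) := by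
      conv_lhs => rw [hreg a]
      exact map_sSup g S
    rw [← h1, hga]
  obtain ⟨T, hTsub, hTfin, hTtop⟩ := hcomp _ hcover
  obtain ⟨T', hT'sub, hT'fin, hT'img⟩ := finite_subset_image_aux g hTfin hTsub
  set b : M := sSup T' with hb
  -- g b = ⊤
  have hgb : g b = ⊤ := by
    apply top_le_iff.mp
    calc ⊤ ≤ sSup T := hTtop
    _ = sSup (g '' T') := by rw [hT'img]
    _ = g b := (map_sSup g T').symm
  -- b is well inside a
  have hwi : bᶜ ⊔ a = ⊤ := by
    clear_value b
    subst hb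
    clear hT'img hgb
    revert hT'sub
    refine Set.Finite.induction_on T' hT'fin (fun _ => by simp) ?_
    intro x s _ _ ih hT'sub
    have hx : xᶜ ⊔ a = ⊤ := hT'sub (Set.mem_insert x s)
    have hs : (sSup s)ᶜ ⊔ a = ⊤ := ih (fun y hy => hT'sub (Set.mem_insert_of_mem x hy))
    rw [sSup_insert, compl_sup, sup_inf_right, hx, hs, inf_top_eq]
  -- g bᶜ = ⊥, hence bᶜ = ⊥
  have hbc : bᶜ = ⊥ := by
    apply hdense
    have h2 : g bᶜ ⊓ g b = ⊥ := by
      rw [← map_inf, compl_inf_self, map_bot]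
    rwa [hgb, inf_top_eq] at h2
  rw [← hwi, hbc, bot_sup_eq]
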